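/- arXiv:1907.13571 — 5 statements merged into one kernel-verified Lean document; each statement's English description precedes it below -/
import Mathlib

section
/- Interior H^2 estimate for the discrete Laplacian: if v, f ∈ C_0(□_m) satisfy −Δ v = f in int(□_m) (where Δ is the discrete Laplacian Δv(x) = ∑_{y~x}(v(y)−v(x))), then ∑_{i,j=1}^d ∑_{x ∈ int(□_m)} (D_{e_i}^* D_{e_j} v(x))^2 ≤ d · ∑_{x ∈ int(□_m)} f(x)^2. -/
/-- The `j`-th canonical basis vector of `ℤ^d`. -/
def latUnit (d : ℕ) (j : Fin d) : Fin d → ℤ := fun i => if i = j then 1 else 0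

/-- The discrete triadic cube `□_m = ℤ^d ∩ (−3^m/2, 3^m/2)^d`. -/
noncomputable def triCube (d m : ℕ) : Finset (Fin d → ℤ) :=
  Finset.Icc (fun _ => -((3^m - 1) / 2 : ℤ)) (fun _ => ((3^m - 1) / 2 : ℤ))

/-- The interior of the cube. -/
noncomputable def triCubeInt (d m : ℕ) : Finset (Fin d → ℤ) :=
  (triCube d m).filter
    (fun x => ∀ j : Fin d, x + latUnit d j ∈ triCube d m ∧ x - latUnit d j ∈ triCube d m)

/-- The discrete Laplacian `Δv(x) = ∑_{y~x} (v(y) − v(x))` on `ℤ^d`. -/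
def latLap (d : ℕ) (v : (Fin d → ℤ) → ℝ) (x : Fin d → ℤ) : ℝ :=
  ∑ j : Fin d, ((v (x + latUnit d j) - v x) + (v (x - latUnit d j) - v x))

namespace H2Aux

/-- Half-width of the cube. -/
def K (m : ℕ) : ℤ := (3 ^ m - 1) / 2

variable {d m : ℕ}

/-- Second difference `D_i^* D_i v`. -/
def DD (v : (Fin d → ℤ) → ℝ) (i : Fin d) (x : Fin d → ℤ) : ℝ :=
  (v x - v (x - latUnit d i)) - (v (x + latUnit d i) - v x)

/-- Mixed second difference `D_i^* D_j v`. -/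
def DA (v : (Fin d → ℤ) → ℝ) (i j : Fin d) (x : Fin d → ℤ) : ℝ :=
  (v (x - latUnit d i + latUnit d j) - v (x - latUnit d i)) - (v (x + latUnit d j) - v x)

/-- First difference `D_j v`. -/
def Dw (v : (Fin d → ℤ) → ℝ) (j : Fin d) (x : Fin d → ℤ) : ℝ :=
  v (x + latUnit d j) - v x

lemma coord_add (x : Fin d → ℤ) (j l : Fin d) :
    (x + latUnit d j) l = x l + (if l = j then 1 else 0) := rfl

lemma coord_sub (x : Fin d → ℤ) (j l : Fin d) :
    (x - latUnit d j) l = x l - (if l = j then 1 else 0) := rfl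

lemma mem_triCube {x : Fin d → ℤ} :
    x ∈ triCube d m ↔ ∀ l, -(K m) ≤ x l ∧ x l ≤ K m := by
  rw [triCube, Finset.mem_Icc, K]
  constructor
  · rintro ⟨h1, h2⟩ l; exact ⟨h1 l, h2 l⟩
  · intro h; exact ⟨fun l => (h l).1, fun l => (h l).2⟩

lemma mem_triCubeInt {x : Fin d → ℤ} :
    x ∈ triCubeInt d m ↔ ∀ l, -(K m) + 1 ≤ x l ∧ x l ≤ K m - 1 := by
  constructor
  · intro hx l
    rw [triCubeInt, Finset.mem_filter] at hx
    obtain ⟨_, hn⟩ := hx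
    have h1 := (mem_triCube.1 (hn l).1) l
    have h2 := (mem_triCube.1 (hn l).2) l
    rw [coord_add] at h1
    rw [coord_sub] at h2
    simp at h1 h2
    exact ⟨by linarith [h2.1], by linarith [h1.2]⟩
  · intro h
    rw [triCubeInt, Finset.mem_filter]
    refine ⟨mem_triCube.2 fun l => ⟨by linarith [(h l).1], by linarith [(h l).2]⟩,
      fun j => ⟨?_, ?_⟩⟩
    · refine mem_triCube.2 fun l => ?_
      rw [coord_add]
      split_ifs
      · exact ⟨by linarith [(h l).1], by linarith [(h l).2]⟩
      · exact ⟨by linarith [(h l).1], by linarith [(h l).2]⟩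
    · refine mem_triCube.2 fun l => ?_
      rw [coord_sub]
      split_ifs
      · exact ⟨by linarith [(h l).1], by linarith [(h l).2]⟩
      · exact ⟨by linarith [(h l).1], by linarith [(h l).2]⟩

/-- An enlarged box containing all supports encountered in the proof. -/
noncomputable def E (d m : ℕ) : Finset (Fin d → ℤ) :=
  Finset.Icc (fun _ => -(K m) - 4) (fun _ => K m + 4)

lemma mem_E {x : Fin d → ℤ} :
    x ∈ E d m ↔ ∀ l, -(K m) - 4 ≤ x l ∧ x l ≤ K m + 4 := by
  rw [E, Finset.mem_Icc]
  constructor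
  · rintro ⟨h1, h2⟩ l; exact ⟨h1 l, h2 l⟩
  · intro h; exact ⟨fun l => (h l).1, fun l => (h l).2⟩

lemma int_subset_E : triCubeInt d m ⊆ E d m := by
  intro x hx
  rw [mem_triCubeInt] at hx
  exact mem_E.2 fun l => ⟨by linarith [(hx l).1], by linarith [(hx l).2]⟩

/-- Two sums of a function agree if the function is supported in both index sets. -/
lemma sum_eq_sum_of_support {α : Type*} [DecidableEq α] {S T : Finset α} {F : α → ℝ}
    (h : ∀ x, F x ≠ 0 → x ∈ S ∧ x ∈ T) : ∑ x ∈ S, F x = ∑ x ∈ T, F x := by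
  have h1 : ∑ x ∈ S ∩ T, F x = ∑ x ∈ S, F x := by
    refine Finset.sum_subset Finset.inter_subset_left fun x hx hnx => ?_
    by_contra hF
    exact hnx (Finset.mem_inter.2 ⟨hx, (h x hF).2⟩)
  have h2 : ∑ x ∈ S ∩ T, F x = ∑ x ∈ T, F x := by
    refine Finset.sum_subset Finset.inter_subset_right fun x hx hnx => ?_
    by_contra hF
    exact hnx (Finset.mem_inter.2 ⟨(h x hF).1, hx⟩)
  rw [← h1, h2]

/-- Shift invariance of sums for compactly supported summands. -/
lemma sum_shift {S : Finset (Fin d → ℤ)} {F : (Fin d → ℤ) → ℝ} {c : Fin d → ℤ}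
    (h : ∀ y, F y ≠ 0 → y ∈ S ∧ y - c ∈ S) :
    ∑ x ∈ S, F (x + c) = ∑ x ∈ S, F x := by
  classical
  have hinj : Function.Injective (fun x : Fin d → ℤ => x + c) := fun a b hab => by
    simpa using congrArg (fun z => z - c) hab
  have hmap : ∑ x ∈ S.map ⟨fun x => x + c, hinj⟩, F x = ∑ x ∈ S, F (x + c) :=
    Finset.sum_map S ⟨fun x => x + c, hinj⟩ F
  rw [← hmap]
  refine sum_eq_sum_of_support fun y hy => ⟨?_, (h y hy).1⟩
  refine Finset.mem_map.2 ⟨y - c, (h y hy).2, ?_⟩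
  simp [sub_add_cancel]

lemma sum_shift' {S : Finset (Fin d → ℤ)} {F : (Fin d → ℤ) → ℝ} {c : Fin d → ℤ}
    (h : ∀ y, F y ≠ 0 → y ∈ S ∧ y + c ∈ S) :
    ∑ x ∈ S, F (x - c) = ∑ x ∈ S, F x := by
  have h' : ∀ y, F y ≠ 0 → y ∈ S ∧ y - (-c) ∈ S := by
    intro y hy
    rw [sub_neg_eq_add]
    exact h y hy
  have hs := sum_shift (S := S) (F := F) (c := -c) h'
  rw [← hs]
  refine Finset.sum_congr rfl fun x _ => ?_
  rw [← sub_eq_add_neg]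

/-- Discrete summation by parts on a sufficiently large box. -/
lemma sbp {S : Finset (Fin d → ℤ)} (g w : (Fin d → ℤ) → ℝ) (c : Fin d → ℤ)
    (h : ∀ y, w y ≠ 0 → y ∈ S ∧ y + c ∈ S) :
    ∑ x ∈ S, g x * (w (x - c) - w x) = ∑ x ∈ S, (g (x + c) - g x) * w x := by
  have key : ∑ x ∈ S, g x * w (x - c) = ∑ x ∈ S, g (x + c) * w x := by
    have step1 : ∑ x ∈ S, g x * w (x - c) =
        ∑ x ∈ S, (fun y => g (y + c) * w y) (x - c) := by
      refine Finset.sum_congr rfl fun x _ => ?_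
      simp only [sub_add_cancel]
    have hshift := sum_shift' (S := S) (F := fun y => g (y + c) * w y) (c := c)
      (fun y hy => h y (by intro h0; simp [h0] at hy))
    rw [step1, hshift]
  calc ∑ x ∈ S, g x * (w (x - c) - w x)
      = ∑ x ∈ S, (g x * w (x - c) - g x * w x) := by
        refine Finset.sum_congr rfl fun x _ => ?_; ring
    _ = (∑ x ∈ S, g x * w (x - c)) - ∑ x ∈ S, g x * w x := Finset.sum_sub_distrib _ _
    _ = (∑ x ∈ S, g (x + c) * w x) - ∑ x ∈ S, g x * w x := by rw [key]
    _ = ∑ x ∈ S, (g (x + c) * w x - g x * w x) := (Finset.sum_sub_distrib _ _).symm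
    _ = ∑ x ∈ S, (g (x + c) - g x) * w x := by
        refine Finset.sum_congr rfl fun x _ => ?_; ring

end H2Aux

open H2Aux in
/-- Interior `H²` estimate for the discrete Laplacian: if `v, f ∈ C_0(□_m)` satisfy
`−Δv = f` in `int □_m`, then
`∑_{i,j} ∑_{x ∈ int □_m} (D_{e_i}^* D_{e_j} v (x))² ≤ d ∑_{x ∈ int □_m} f(x)²`. -/
theorem discrete_H2_interior (d m : ℕ) (v f : (Fin d → ℤ) → ℝ)
    (hv0 : ∀ x, x ∉ triCubeInt d m → v x = 0)
    (hf0 : ∀ x, x ∉ triCubeInt d m → f x = 0)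
    (heq : ∀ x ∈ triCubeInt d m, -(latLap d v x) = f x) :
    ∑ i : Fin d, ∑ j : Fin d, ∑ x ∈ triCubeInt d m,
        ((v (x - latUnit d i + latUnit d j) - v (x - latUnit d i))
          - (v (x + latUnit d j) - v x))^2
      ≤ d * ∑ x ∈ triCubeInt d m, (f x)^2 := by
  classical
  rcases Nat.eq_zero_or_pos d with hd | hd
  · subst hd
    simp
  show ∑ i : Fin d, ∑ j : Fin d, ∑ x ∈ triCubeInt d m, (DA v i j x)^2
      ≤ d * ∑ x ∈ triCubeInt d m, (f x)^2
  -- support of v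
  have hvsupp : ∀ x, v x ≠ 0 → ∀ l, -(K m) ≤ x l ∧ x l ≤ K m := by
    intro x hx l
    have hxI : x ∈ triCubeInt d m := by
      by_contra hxn
      exact hx (hv0 x hxn)
    have h := mem_triCubeInt.1 hxI l
    exact ⟨by linarith [h.1], by linarith [h.2]⟩
  -- support of the first differences
  have hwsupp : ∀ j x, Dw v j x ≠ 0 → ∀ l, -(K m) - 1 ≤ x l ∧ x l ≤ K m + 1 := by
    intro j x hx l
    have hcases : v (x + latUnit d j) ≠ 0 ∨ v x ≠ 0 := by
      by_contra hcon
      push_neg at hcon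
      apply hx
      simp only [Dw, hcon.1, hcon.2, sub_zero]
    rcases hcases with hc | hc
    · have h2 := hvsupp _ hc l
      rw [coord_add] at h2
      split_ifs at h2 <;> exact ⟨by linarith [h2.1], by linarith [h2.2]⟩
    · have h2 := hvsupp _ hc l
      exact ⟨by linarith [h2.1], by linarith [h2.2]⟩
  -- membership conditions needed for summation by parts
  have hwE : ∀ j k : Fin d, ∀ y, Dw v j y ≠ 0 → y ∈ E d m ∧ y + latUnit d k ∈ E d m := by
    intro j k y hy
    have hb := hwsupp j y hy
    constructor
    · exact mem_E.2 fun l => ⟨by linarith [(hb l).1], by linarith [(hb l).2]⟩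
    · refine mem_E.2 fun l => ?_
      rw [coord_add]
      split_ifs <;> exact ⟨by linarith [(hb l).1], by linarith [(hb l).2]⟩
  -- the equation: f is the sum of the second differences on the interior
  have hPsum : ∀ x ∈ triCubeInt d m, ∑ i : Fin d, DD v i x = f x := by
    intro x hx
    rw [← heq x hx, latLap, ← Finset.sum_neg_distrib]
    refine Finset.sum_congr rfl fun i _ => ?_
    simp only [DD]
    ring
  -- key pairwise inequality
  have key : ∀ i j : Fin d,
      ∑ x ∈ triCubeInt d m, (DA v i j x)^2 ≤ ∑ x ∈ triCubeInt d m, DD v i x * DD v j x := by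
    intro i j
    rcases eq_or_ne i j with rfl | hij
    · refine le_of_eq (Finset.sum_congr rfl fun x _ => ?_)
      simp only [DA, DD, sub_add_cancel]
      ring
    · -- off-diagonal case
      have hIE : triCubeInt d m ⊆ E d m := int_subset_E
      -- step 1: enlarge the sum of squares
      have step1 : ∑ x ∈ triCubeInt d m, (DA v i j x)^2 ≤ ∑ x ∈ E d m, (DA v i j x)^2 :=
        Finset.sum_le_sum_of_subset_of_nonneg hIE fun x _ _ => sq_nonneg _
      -- step 2: the exact identity on the large box
      have hAw : ∀ x, DA v i j x = Dw v j (x - latUnit d i) - Dw v j x := by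
        intro x
        simp only [DA, Dw]
      have step2 : ∑ x ∈ E d m, (DA v i j x)^2 = ∑ x ∈ E d m, DD v i x * DD v j x := by
        have lhs1 : ∑ x ∈ E d m, (DA v i j x)^2
            = ∑ x ∈ E d m, (DA v i j (x + latUnit d i) - DA v i j x) * Dw v j x := by
          calc ∑ x ∈ E d m, (DA v i j x)^2
              = ∑ x ∈ E d m, DA v i j x * (Dw v j (x - latUnit d i) - Dw v j x) := by
                refine Finset.sum_congr rfl fun x _ => ?_
                rw [sq, hAw x]
            _ = ∑ x ∈ E d m, (DA v i j (x + latUnit d i) - DA v i j x) * Dw v j x :=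
                sbp (DA v i j) (Dw v j) (latUnit d i) (hwE j i)
        have rhs1 : ∑ x ∈ E d m, DD v i x * DD v j x
            = ∑ x ∈ E d m, (DD v i (x + latUnit d j) - DD v i x) * Dw v j x := by
          calc ∑ x ∈ E d m, DD v i x * DD v j x
              = ∑ x ∈ E d m, DD v i x * (Dw v j (x - latUnit d j) - Dw v j x) := by
                refine Finset.sum_congr rfl fun x _ => ?_
                congr 1
                simp only [DD, Dw, sub_add_cancel]
            _ = ∑ x ∈ E d m, (DD v i (x + latUnit d j) - DD v i x) * Dw v j x :=
                sbp (DD v i) (Dw v j) (latUnit d j) (hwE j j)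
        rw [lhs1, rhs1]
        refine Finset.sum_congr rfl fun x _ => ?_
        congr 1
        have h1 : x + latUnit d j - latUnit d i = x - latUnit d i + latUnit d j := by ring
        have h2 : x + latUnit d j + latUnit d i = x + latUnit d i + latUnit d j := by ring
        have h3 : x + latUnit d i - latUnit d i = x := add_sub_cancel_right x (latUnit d i)
        simp only [DA, DD, Dw, h1, h2, h3]
        ring
      -- step 3: product of second differences in different directions vanishes off interior
      have step3 : ∑ x ∈ E d m, DD v i x * DD v j x
          = ∑ x ∈ triCubeInt d m, DD v i x * DD v j x := by
        symm
        refine Finset.sum_subset hIE fun x hxE hxI => ?_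
        by_contra hne
        have hPi : DD v i x ≠ 0 := fun h0 => hne (by rw [h0, zero_mul])
        have hPj : DD v j x ≠ 0 := fun h0 => hne (by rw [h0, mul_zero])
        have keyP : ∀ k : Fin d, DD v k x ≠ 0 → ∀ l, l ≠ k →
            -(K m) + 1 ≤ x l ∧ x l ≤ K m - 1 := by
          intro k hk l hl
          have hv3 : v x ≠ 0 ∨ v (x - latUnit d k) ≠ 0 ∨ v (x + latUnit d k) ≠ 0 := by
            by_contra hcon
            push_neg at hcon
            apply hk
            simp only [DD, hcon.1, hcon.2.1, hcon.2.2]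
            ring
          have memI : ∀ y : Fin d → ℤ, v y ≠ 0 → y ∈ triCubeInt d m := by
            intro y hy
            by_contra hyn
            exact hy (hv0 y hyn)
          rcases hv3 with hc | hc | hc
          · exact mem_triCubeInt.1 (memI _ hc) l
          · have h := mem_triCubeInt.1 (memI _ hc) l
            rw [coord_sub, if_neg hl] at h
            simpa using h
          · have h := mem_triCubeInt.1 (memI _ hc) l
            rw [coord_add, if_neg hl] at h
            simpa using h
        apply hxI
        rw [mem_triCubeInt]
        intro l
        by_cases hl : l = i
        · subst hl
          exact keyP j hPj l hij
        · exact keyP i hPi l hl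
      calc ∑ x ∈ triCubeInt d m, (DA v i j x)^2
          ≤ ∑ x ∈ E d m, (DA v i j x)^2 := step1
        _ = ∑ x ∈ E d m, DD v i x * DD v j x := step2
        _ = ∑ x ∈ triCubeInt d m, DD v i x * DD v j x := step3
  -- assemble
  have main : ∑ i : Fin d, ∑ j : Fin d, ∑ x ∈ triCubeInt d m, (DA v i j x)^2
      ≤ ∑ x ∈ triCubeInt d m, (f x)^2 := by
    calc ∑ i : Fin d, ∑ j : Fin d, ∑ x ∈ triCubeInt d m, (DA v i j x)^2
        ≤ ∑ i : Fin d, ∑ j : Fin d, ∑ x ∈ triCubeInt d m, DD v i x * DD v j x :=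
          Finset.sum_le_sum fun i _ => Finset.sum_le_sum fun j _ => key i j
      _ = ∑ i : Fin d, ∑ x ∈ triCubeInt d m, ∑ j : Fin d, DD v i x * DD v j x :=
          Finset.sum_congr rfl fun i _ => Finset.sum_comm
      _ = ∑ x ∈ triCubeInt d m, ∑ i : Fin d, ∑ j : Fin d, DD v i x * DD v j x :=
          Finset.sum_comm
      _ = ∑ x ∈ triCubeInt d m, (f x)^2 := by
          refine Finset.sum_congr rfl fun x hx => ?_
          rw [← Finset.sum_mul_sum, hPsum x hx, sq]
  refine main.trans ?_
  refine le_mul_of_one_le_left (Finset.sum_nonneg fun x _ => sq_nonneg _) ?_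
  exact_mod_cast hd
end

section
/- Discrete trace inequality: there is a constant C depending only on d such that for every u : □_m → ℝ and every 0 ≤ K ≤ 3^m/4, ∑_{x ∈ □_m, dist(x, ∂□_m) ≤ K} u(x)^2 ≤ C (K+1) (3^{−m} ‖u‖²_{L²(□_m)} + ‖u‖_{L²(□_m)} ‖∇u‖_{L²(□_m)}), where ‖∇u‖²_{L²(□_m)} = (1/2)∑_{x,y ∈ □_m, x~y}(u(y)−u(x))². -/
open scoped Classical

/-- The boundary `∂□_m = □_m \ int □_m`. -/
noncomputable def triCubeBdry (d m : ℕ) : Finset (Fin d → ℤ) := triCube d m \ triCubeInt d m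

namespace DTI

/-- half-width of the cube -/
def tcR (m : ℕ) : ℤ := ((3:ℤ)^m - 1) / 2

lemma two_tcR (m : ℕ) : 2 * tcR m + 1 = (3:ℤ)^m := by
  have h2 : Odd ((3:ℤ)^m) := Odd.pow ⟨1, by ring⟩
  obtain ⟨k, hk⟩ := h2
  have h : (2:ℤ) ∣ (3:ℤ)^m - 1 := ⟨k, by omega⟩
  have := Int.ediv_mul_cancel h
  unfold tcR
  omega

lemma tcR_nonneg (m : ℕ) : 0 ≤ tcR m := by
  have h := two_tcR m
  have h1 : (0:ℤ) < 3^m := pow_pos (by norm_num) m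
  omega

lemma mem_triCube {d m : ℕ} {x : Fin d → ℤ} :
    x ∈ triCube d m ↔ ∀ i, -tcR m ≤ x i ∧ x i ≤ tcR m := by
  simp only [triCube, Finset.mem_Icc]
  constructor
  · rintro ⟨h1, h2⟩ i; exact ⟨h1 i, h2 i⟩
  · intro h; exact ⟨fun i => (h i).1, fun i => (h i).2⟩

lemma add_smul_unit_apply {d : ℕ} (x : Fin d → ℤ) (j : Fin d) (c : ℤ) (i : Fin d) :
    (x + c • latUnit d j) i = x i + (if i = j then c else 0) := by
  simp [latUnit, mul_ite]

lemma add_unit_apply {d : ℕ} (x : Fin d → ℤ) (j : Fin d) (i : Fin d) :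
    (x + latUnit d j) i = x i + (if i = j then 1 else 0) := by
  simp [latUnit]

lemma sub_unit_apply {d : ℕ} (x : Fin d → ℤ) (j : Fin d) (i : Fin d) :
    (x - latUnit d j) i = x i - (if i = j then 1 else 0) := by
  simp [latUnit]

lemma add_unit_eq {d : ℕ} (x : Fin d → ℤ) (j : Fin d) (c : ℤ) :
    (x + c • latUnit d j) + latUnit d j = x + (c+1) • latUnit d j := by
  rw [add_smul, one_smul, add_assoc]

lemma bdry_coord {d m : ℕ} {y : Fin d → ℤ} (hy : y ∈ triCubeBdry d m) :
    ∃ j : Fin d, |y j| = tcR m := by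
  rw [triCubeBdry, Finset.mem_sdiff] at hy
  obtain ⟨hyc, hyn⟩ := hy
  rw [triCubeInt, Finset.mem_filter] at hyn
  have hyn' : ¬ ∀ j : Fin d, y + latUnit d j ∈ triCube d m ∧ y - latUnit d j ∈ triCube d m :=
    fun h => hyn ⟨hyc, h⟩
  obtain ⟨j, hj⟩ := not_forall.mp hyn'
  have hb := mem_triCube.mp hyc
  refine ⟨j, ?_⟩
  rw [abs_eq (tcR_nonneg m)]
  rcases not_and_or.mp hj with h | h
  · rw [mem_triCube] at h
    push_neg at h
    obtain ⟨i, hi⟩ := h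
    rw [add_unit_apply] at hi
    by_cases hij : i = j
    · subst hij
      have h1 := hb i
      left
      rw [if_pos rfl] at hi
      omega
    · rw [if_neg hij, add_zero] at hi
      exact absurd (hb i) (by omega)
  · rw [mem_triCube] at h
    push_neg at h
    obtain ⟨i, hi⟩ := h
    rw [sub_unit_apply] at hi
    by_cases hij : i = j
    · subst hij
      have h1 := hb i
      right
      rw [if_pos rfl] at hi
      omega
    · rw [if_neg hij, sub_zero] at hi
      exact absurd (hb i) (by omega)

lemma sum_comp_le {α β : Type*} [DecidableEq β] (A : Finset α) (B : Finset β)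
    (φ : α → β) (f : β → ℝ) (hf : ∀ y, 0 ≤ f y) (hφ : ∀ a ∈ A, φ a ∈ B)
    (c : ℕ) (hc : ∀ y, (A.filter (fun a => φ a = y)).card ≤ c) :
    ∑ a ∈ A, f (φ a) ≤ c * ∑ y ∈ B, f y := by
  calc ∑ a ∈ A, f (φ a)
      = ∑ y ∈ B, ∑ a ∈ A.filter (fun a => φ a = y), f (φ a) :=
        (Finset.sum_fiberwise_of_maps_to hφ _).symm
    _ ≤ ∑ y ∈ B, (c : ℝ) * f y := by
        apply Finset.sum_le_sum
        intro y hy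
        have h1 : ∑ a ∈ A.filter (fun a => φ a = y), f (φ a)
            = (A.filter (fun a => φ a = y)).card • f y := by
          rw [Finset.sum_congr rfl (fun a ha => by rw [(Finset.mem_filter.mp ha).2]),
            Finset.sum_const]
        rw [h1, nsmul_eq_mul]
        exact mul_le_mul_of_nonneg_right (by exact_mod_cast hc y) (hf y)
    _ = c * ∑ y ∈ B, f y := by rw [Finset.mul_sum]

/-- the shifted point used in the averaging argument -/
def shiftPt (d : ℕ) (j : Fin d) (f g : ℕ → ℤ) (p : (Fin d → ℤ) × ℕ) : Fin d → ℤ :=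
  p.1 + (if 0 ≤ p.1 j then f p.2 else g p.2) • latUnit d j

lemma shiftPt_card_le (d m : ℕ) (j : Fin d) (K : ℝ) (hK : 0 ≤ K) (A : Finset ℕ)
    (f g : ℕ → ℤ) (hf : Function.Injective f) (hg : Function.Injective g)
    (y : Fin d → ℤ) :
    ((((triCube d m).filter (fun x => tcR m - ⌊K⌋ ≤ |x j|)) ×ˢ A).filter
      (fun p => shiftPt d j f g p = y)).card ≤ 2 * (⌊K⌋.toNat + 1) := by
  have h0 : 0 ≤ ⌊K⌋ := Int.floor_nonneg.mpr hK
  have hcard : ((Finset.univ : Finset Bool) ×ˢ Finset.Icc (tcR m - ⌊K⌋) (tcR m)).card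
      = 2 * (⌊K⌋.toNat + 1) := by
    rw [Finset.card_product, Finset.card_univ, Fintype.card_bool, Int.card_Icc]
    congr 1
    omega
  rw [← hcard]
  apply Finset.card_le_card_of_injOn (fun p => (decide (0 ≤ p.1 j), |p.1 j|))
  · rintro ⟨x, s⟩ hp
    simp only [Finset.mem_coe, Finset.mem_filter, Finset.mem_product] at hp
    obtain ⟨⟨⟨hxc, hxlow⟩, _⟩, _⟩ := hp
    have hbd := (mem_triCube.mp hxc) j
    simp only [Finset.mem_coe, Finset.mem_product, Finset.mem_univ, true_and, Finset.mem_Icc]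
    exact ⟨hxlow, abs_le.mpr ⟨hbd.1, hbd.2⟩⟩
  · rintro ⟨x, s⟩ hp ⟨z, t⟩ hq hpq
    simp only [Finset.coe_filter, Finset.mem_product, Set.mem_setOf_eq] at hp hq
    obtain ⟨-, hpy⟩ := hp
    obtain ⟨-, hqy⟩ := hq
    simp only [Prod.mk.injEq] at hpq
    obtain ⟨hbit, habs⟩ := hpq
    have hsign : (0 ≤ x j) ↔ (0 ≤ z j) := by
      constructor <;> intro h
      · by_contra h2
        rw [decide_eq_true h] at hbit
        exact h2 (of_decide_eq_true hbit.symm)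
      · by_contra h2
        rw [decide_eq_true h] at hbit
        exact h2 (of_decide_eq_true hbit)
    have hxz : x j = z j := by
      rcases le_or_gt 0 (x j) with h | h
      · have h2 := hsign.mp h
        rwa [abs_of_nonneg h, abs_of_nonneg h2] at habs
      · have h2 : ¬ (0 ≤ z j) := fun hz => absurd (hsign.mpr hz) (not_le.mpr h)
        rw [abs_of_neg h, abs_of_neg (not_le.mp h2)] at habs
        omega
    have hyj := congrFun hpy j
    have hzj := congrFun hqy j
    rw [shiftPt, add_smul_unit_apply, if_pos rfl] at hyj hzj
    dsimp only at hyj hzj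
    have hx1 : x = z := by
      funext i
      by_cases hij : i = j
      · subst hij; exact hxz
      · have h1 := congrFun hpy i
        have h2 := congrFun hqy i
        rw [shiftPt, add_smul_unit_apply, if_neg hij, add_zero] at h1 h2
        dsimp only at h1 h2
        rw [h1, h2]
    have hs2 : s = t := by
      rcases le_or_gt 0 (x j) with h | h
      · have h2 := hsign.mp h
        rw [if_pos h] at hyj
        rw [if_pos h2] at hzj
        exact hf (by omega)
      · have h2 : z j < 0 := by
          by_contra h3
          exact absurd (hsign.mpr (not_lt.mp h3)) (not_le.mpr h)
        rw [if_neg (not_le.mpr h)] at hyj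
        rw [if_neg (not_le.mpr h2)] at hzj
        exact hg (by omega)
    simp [hx1, hs2]

lemma sq_sub_sq_le (A B : ℝ) : A^2 - B^2 ≤ |B - A| * (|A| + |B|) := by
  have h1 : A^2 - B^2 ≤ |A^2 - B^2| := le_abs_self _
  have h2 : |A^2 - B^2| = |B - A| * |A + B| := by
    rw [abs_sub_comm, ← abs_mul]
    congr 1
    ring
  have h3 : |A + B| ≤ |A| + |B| := abs_add_le _ _
  calc A^2 - B^2 ≤ |B - A| * |A + B| := by rw [← h2]; exact h1
    _ ≤ |B - A| * (|A| + |B|) := mul_le_mul_of_nonneg_left h3 (abs_nonneg _)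

lemma shiftPt_apply {d : ℕ} (j : Fin d) (f g : ℕ → ℤ) (x : Fin d → ℤ) (s : ℕ) (i : Fin d) :
    shiftPt d j f g (x, s) i
      = x i + (if i = j then (if 0 ≤ x j then f s else g s) else 0) := by
  rw [shiftPt, add_smul_unit_apply]

lemma shiftPt_add_unit {d : ℕ} (j : Fin d) (f g : ℕ → ℤ) (x : Fin d → ℤ) (s : ℕ) (i : Fin d) :
    (shiftPt d j f g (x, s) + latUnit d j) i
      = x i + (if i = j then (if 0 ≤ x j then f s else g s) + 1 else 0) := by
  rw [shiftPt, add_unit_eq, add_smul_unit_apply]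

lemma inj1 : Function.Injective (fun s : ℕ => -(s:ℤ)) := by
  intro a b h; simpa using h

lemma inj2 : Function.Injective (fun s : ℕ => (s:ℤ)) := by
  intro a b h; simpa using h

lemma inj3 : Function.Injective (fun s : ℕ => -((s:ℤ)+1)) := by
  intro a b h; simp only [neg_inj, add_left_inj] at h; exact_mod_cast h

lemma stepB (d m : ℕ) (j : Fin d) (u : (Fin d → ℤ) → ℝ) (K : ℝ) (hK0 : 0 ≤ K) :
    ∑ x ∈ (triCube d m).filter (fun x => tcR m - ⌊K⌋ ≤ |x j|), u x ^ 2 ≤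
      2*(K+1) * (2 * ((3:ℝ)^m)⁻¹ * ∑ x ∈ triCube d m, u x ^ 2)
      + 2*(K+1) * ∑ a ∈ (triCube d m).filter (fun a => a + latUnit d j ∈ triCube d m),
          |u (a + latUnit d j) - u a| * (|u a| + |u (a + latUnit d j)|) := by
  set n := (tcR m).toNat with hndef
  have hn : (n : ℤ) = tcR m := Int.toNat_of_nonneg (tcR_nonneg m)
  set φ1 := shiftPt d j (fun s => -(s:ℤ)) (fun s => (s:ℤ)) with hφ1
  set φ2 := shiftPt d j (fun s => -((s:ℤ)+1)) (fun s => (s:ℤ)) with hφ2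
  set Sj := (triCube d m).filter (fun x => tcR m - ⌊K⌋ ≤ |x j|) with hSj
  set Ej := (triCube d m).filter (fun a => a + latUnit d j ∈ triCube d m) with hEj
  set w : (Fin d → ℤ) → ℝ :=
    fun a => |u (a + latUnit d j) - u a| * (|u a| + |u (a + latUnit d j)|) with hw
  have hw0 : ∀ a, 0 ≤ w a := fun a => mul_nonneg (abs_nonneg _)
    (add_nonneg (abs_nonneg _) (abs_nonneg _))
  set Q := ∑ x ∈ triCube d m, u x ^ 2 with hQ
  have hQ0 : 0 ≤ Q := Finset.sum_nonneg fun _ _ => sq_nonneg _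
  set Wj := ∑ a ∈ Ej, w a with hWj
  have hWj0 : 0 ≤ Wj := Finset.sum_nonneg fun a _ => hw0 a
  set c : ℕ := 2 * (⌊K⌋.toNat + 1) with hcdef
  have hfloor0 : 0 ≤ ⌊K⌋ := Int.floor_nonneg.mpr hK0
  have hcK : (c : ℝ) ≤ 2 * (K + 1) := by
    have h1 : (⌊K⌋ : ℝ) ≤ K := Int.floor_le K
    have h2 : ((⌊K⌋.toNat : ℕ) : ℝ) ≤ K := by
      rw [show ((⌊K⌋.toNat : ℕ) : ℝ) = ((⌊K⌋.toNat : ℤ) : ℝ) by push_cast; ring,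
        Int.toNat_of_nonneg hfloor0]
      exact h1
    rw [hcdef]
    push_cast
    linarith
  -- maps-to facts
  have hmaps1 : ∀ p ∈ Sj ×ˢ Finset.range (n+1), φ1 p ∈ triCube d m := by
    rintro ⟨x, s⟩ hp
    rw [Finset.mem_product, Finset.mem_range] at hp
    obtain ⟨hx, hs⟩ := hp
    dsimp only at hx hs
    rw [hSj, Finset.mem_filter] at hx
    have hxc := mem_triCube.mp hx.1
    rw [mem_triCube]
    intro i
    rw [hφ1, shiftPt_apply]
    by_cases hij : i = j
    · rw [if_pos hij]
      subst hij
      have hbd := hxc i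
      have hsz : (s : ℤ) ≤ tcR m := by omega
      split_ifs with h <;> omega
    · rw [if_neg hij, add_zero]
      exact hxc i
  have hmaps2 : ∀ p ∈ Sj ×ˢ Finset.range n, φ2 p ∈ Ej := by
    rintro ⟨x, r⟩ hp
    rw [Finset.mem_product, Finset.mem_range] at hp
    obtain ⟨hx, hr⟩ := hp
    dsimp only at hx hr
    rw [hSj, Finset.mem_filter] at hx
    have hxc := mem_triCube.mp hx.1
    rw [hEj, Finset.mem_filter]
    have hrz : (r : ℤ) + 1 ≤ tcR m := by omega
    constructor
    · rw [mem_triCube]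
      intro i
      rw [hφ2, shiftPt_apply]
      by_cases hij : i = j
      · rw [if_pos hij]
        subst hij
        have hbd := hxc i
        split_ifs with h <;> omega
      · rw [if_neg hij, add_zero]
        exact hxc i
    · rw [mem_triCube]
      intro i
      rw [hφ2, shiftPt_add_unit]
      by_cases hij : i = j
      · rw [if_pos hij]
        subst hij
        have hbd := hxc i
        split_ifs with h <;> omega
      · rw [if_neg hij, add_zero]
        exact hxc i
  -- pointwise telescoping bound
  have key : ∀ x ∈ Sj, u x ^ 2 ≤
      ((n:ℝ)+1)⁻¹ * ∑ s ∈ Finset.range (n+1), u (φ1 (x, s)) ^ 2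
        + ∑ r ∈ Finset.range n, w (φ2 (x, r)) := by
    intro x hx
    have hstep : ∀ r : ℕ, u (φ1 (x, r)) ^ 2 - u (φ1 (x, r+1)) ^ 2 ≤ w (φ2 (x, r)) := by
      intro r
      by_cases h : 0 ≤ x j
      · have ha : φ1 (x, r+1) = φ2 (x, r) := by
          rw [hφ1, hφ2, shiftPt, shiftPt]
          dsimp only
          rw [if_pos h, if_pos h]
          have hc : -((r:ℕ)+1 : ℕ) = (-((r:ℤ)+1) : ℤ) := by push_cast; ring
          rw [hc]
        have hb : φ1 (x, r) = φ2 (x, r) + latUnit d j := by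
          rw [hφ1, hφ2, shiftPt, shiftPt, add_unit_eq]
          dsimp only
          rw [if_pos h, if_pos h]
          have hc : (-((r:ℤ)+1) + 1 : ℤ) = -((r:ℕ) : ℤ) := by ring
          rw [hc]
        rw [ha, hb, hw]
        have h5 := sq_sub_sq_le (u (φ2 (x,r) + latUnit d j)) (u (φ2 (x,r)))
        have h6 : |u (φ2 (x,r)) - u (φ2 (x,r) + latUnit d j)|
            = |u (φ2 (x,r) + latUnit d j) - u (φ2 (x,r))| := abs_sub_comm _ _
        rw [h6] at h5
        calc u (φ2 (x,r) + latUnit d j) ^ 2 - u (φ2 (x,r)) ^ 2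
            ≤ |u (φ2 (x,r) + latUnit d j) - u (φ2 (x,r))|
              * (|u (φ2 (x,r) + latUnit d j)| + |u (φ2 (x,r))|) := h5
          _ = |u (φ2 (x,r) + latUnit d j) - u (φ2 (x,r))|
              * (|u (φ2 (x,r))| + |u (φ2 (x,r) + latUnit d j)|) := by ring
      · have ha : φ1 (x, r) = φ2 (x, r) := by
          rw [hφ1, hφ2, shiftPt, shiftPt]
          dsimp only
          rw [if_neg h, if_neg h]
        have hb : φ1 (x, r+1) = φ2 (x, r) + latUnit d j := by
          rw [hφ1, hφ2, shiftPt, shiftPt, add_unit_eq]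
          dsimp only
          rw [if_neg h, if_neg h]
          have hc : ((r:ℕ)+1 : ℕ) = (((r:ℕ) : ℤ) + 1 : ℤ) := by push_cast; ring
          rw [hc]
        rw [ha, hb, hw]
        exact sq_sub_sq_le (u (φ2 (x,r))) (u (φ2 (x,r) + latUnit d j))
    have hfin : ∀ s ∈ Finset.range (n+1),
        u x ^ 2 ≤ u (φ1 (x, s)) ^ 2 + ∑ r ∈ Finset.range n, w (φ2 (x, r)) := by
      intro s hs
      rw [Finset.mem_range] at hs
      have h0 : φ1 (x, 0) = x := by
        rw [hφ1, shiftPt]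
        dsimp only
        simp
      have tel : ∑ r ∈ Finset.range s,
          (u (φ1 (x, r)) ^ 2 - u (φ1 (x, r+1)) ^ 2)
          = u (φ1 (x, 0)) ^ 2 - u (φ1 (x, s)) ^ 2 :=
        Finset.sum_range_sub' (fun r => u (φ1 (x, r)) ^ 2) s
      have h1 : ∑ r ∈ Finset.range s, (u (φ1 (x, r)) ^ 2 - u (φ1 (x, r+1)) ^ 2)
          ≤ ∑ r ∈ Finset.range s, w (φ2 (x, r)) :=
        Finset.sum_le_sum fun r _ => hstep r
      have h2 : ∑ r ∈ Finset.range s, w (φ2 (x, r)) ≤ ∑ r ∈ Finset.range n, w (φ2 (x, r)) :=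
        Finset.sum_le_sum_of_subset_of_nonneg
          (Finset.range_subset_range.mpr (by omega)) (fun r _ _ => hw0 _)
      rw [h0] at tel
      linarith
    have hsum := Finset.sum_le_sum hfin
    rw [Finset.sum_const, Finset.card_range, Finset.sum_add_distrib,
      Finset.sum_const, Finset.card_range, nsmul_eq_mul, nsmul_eq_mul] at hsum
    push_cast at hsum
    have hN : (0:ℝ) < (n:ℝ) + 1 := by positivity
    have hsum2 : u x ^ 2 * ((n:ℝ)+1) ≤ ∑ s ∈ Finset.range (n+1), u (φ1 (x,s)) ^ 2
        + ((n:ℝ)+1) * ∑ r ∈ Finset.range n, w (φ2 (x,r)) := by linarith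
    calc u x ^ 2 = (u x ^ 2 * ((n:ℝ)+1)) * ((n:ℝ)+1)⁻¹ := by field_simp
      _ ≤ (∑ s ∈ Finset.range (n+1), u (φ1 (x,s)) ^ 2
            + ((n:ℝ)+1) * ∑ r ∈ Finset.range n, w (φ2 (x,r))) * ((n:ℝ)+1)⁻¹ :=
          mul_le_mul_of_nonneg_right hsum2 (by positivity)
      _ = ((n:ℝ)+1)⁻¹ * ∑ s ∈ Finset.range (n+1), u (φ1 (x, s)) ^ 2
            + ∑ r ∈ Finset.range n, w (φ2 (x, r)) := by
          field_simp
  -- sum the pointwise bound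
  have hT1 : ∑ x ∈ Sj, u x ^ 2 ≤
      ((n:ℝ)+1)⁻¹ * ∑ p ∈ Sj ×ˢ Finset.range (n+1), u (φ1 p) ^ 2
        + ∑ p ∈ Sj ×ˢ Finset.range n, w (φ2 p) := by
    calc ∑ x ∈ Sj, u x ^ 2
        ≤ ∑ x ∈ Sj, (((n:ℝ)+1)⁻¹ * ∑ s ∈ Finset.range (n+1), u (φ1 (x, s)) ^ 2
            + ∑ r ∈ Finset.range n, w (φ2 (x, r))) := Finset.sum_le_sum key
      _ = _ := by
          rw [Finset.sum_add_distrib, ← Finset.mul_sum, Finset.sum_product, Finset.sum_product]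
  have h1 : ∑ p ∈ Sj ×ˢ Finset.range (n+1), u (φ1 p) ^ 2 ≤ (c:ℝ) * Q := by
    rw [hQ]
    exact sum_comp_le _ _ _ _ (fun y => sq_nonneg _) hmaps1 c
      (fun y => shiftPt_card_le d m j K hK0 _ _ _ inj1 inj2 y)
  have h2 : ∑ p ∈ Sj ×ˢ Finset.range n, w (φ2 p) ≤ (c:ℝ) * Wj := by
    rw [hWj]
    exact sum_comp_le _ _ _ _ (fun y => hw0 y) hmaps2 c
      (fun y => shiftPt_card_le d m j K hK0 _ _ _ inj3 inj2 y)
  have hinv : ((n:ℝ)+1)⁻¹ ≤ 2 * ((3:ℝ)^m)⁻¹ := by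
    have h3 : (2*(n:ℝ)+1) = (3:ℝ)^m := by
      have h4 : 2*(n:ℤ)+1 = (3:ℤ)^m := by rw [hn]; exact two_tcR m
      exact_mod_cast h4
    calc ((n:ℝ)+1)⁻¹ ≤ ((3:ℝ)^m / 2)⁻¹ := by
          apply inv_anti₀ (by positivity) (by linarith)
      _ = 2 * ((3:ℝ)^m)⁻¹ := by
          rw [inv_div]
          ring
  have hS10 : (0:ℝ) ≤ ∑ p ∈ Sj ×ˢ Finset.range (n+1), u (φ1 p) ^ 2 :=
    Finset.sum_nonneg fun _ _ => sq_nonneg _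
  calc ∑ x ∈ Sj, u x ^ 2
      ≤ ((n:ℝ)+1)⁻¹ * ((c:ℝ) * Q) + (c:ℝ) * Wj := by
        have e0 : ((n:ℝ)+1)⁻¹ * ∑ p ∈ Sj ×ˢ Finset.range (n+1), u (φ1 p) ^ 2
            ≤ ((n:ℝ)+1)⁻¹ * ((c:ℝ) * Q) :=
          mul_le_mul_of_nonneg_left h1 (by positivity)
        linarith
    _ ≤ (2*((3:ℝ)^m)⁻¹) * ((2*(K+1)) * Q) + (2*(K+1)) * Wj := by
        have hcQ0 : (0:ℝ) ≤ (c:ℝ) * Q := mul_nonneg (by positivity) hQ0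
        have e1 : ((n:ℝ)+1)⁻¹ * ((c:ℝ)*Q) ≤ (2*((3:ℝ)^m)⁻¹) * ((2*(K+1))*Q) :=
          mul_le_mul hinv (mul_le_mul_of_nonneg_right hcK hQ0) hcQ0 (by positivity)
        have e2 : (c:ℝ) * Wj ≤ (2*(K+1))*Wj := mul_le_mul_of_nonneg_right hcK hWj0
        linarith
    _ = 2*(K+1) * (2*((3:ℝ)^m)⁻¹ * Q) + 2*(K+1) * Wj := by ring


lemma le_sqrt_mul_sqrt (a b c : ℝ) (ha : 0 ≤ a) (hb : 0 ≤ b) (h : a^2 ≤ b * c) :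
    a ≤ Real.sqrt b * Real.sqrt c := by
  have h1 := Real.sqrt_le_sqrt h
  rwa [Real.sqrt_sq ha, Real.sqrt_mul hb] at h1

lemma energy_eq (d m : ℕ) (u : (Fin d → ℤ) → ℝ) :
    (1/2 : ℝ) * ∑ x ∈ triCube d m, ∑ j : Fin d,
      ((if x + latUnit d j ∈ triCube d m then (u (x + latUnit d j) - u x)^2 else 0)
        + (if x - latUnit d j ∈ triCube d m then (u (x - latUnit d j) - u x)^2 else 0))
    = ∑ j : Fin d, ∑ a ∈ (triCube d m).filter (fun a => a + latUnit d j ∈ triCube d m),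
        (u (a + latUnit d j) - u a)^2 := by
  rw [Finset.sum_comm, Finset.mul_sum]
  apply Finset.sum_congr rfl
  intro j _
  rw [Finset.sum_add_distrib]
  have h1 : ∑ x ∈ triCube d m,
      (if x + latUnit d j ∈ triCube d m then (u (x + latUnit d j) - u x)^2 else 0)
      = ∑ a ∈ (triCube d m).filter (fun a => a + latUnit d j ∈ triCube d m),
        (u (a + latUnit d j) - u a)^2 := (Finset.sum_filter _ _).symm
  have h2 : ∑ x ∈ triCube d m,
      (if x - latUnit d j ∈ triCube d m then (u (x - latUnit d j) - u x)^2 else 0)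
      = ∑ a ∈ (triCube d m).filter (fun a => a + latUnit d j ∈ triCube d m),
        (u (a + latUnit d j) - u a)^2 := by
    rw [← Finset.sum_filter]
    apply Finset.sum_nbij' (fun x => x - latUnit d j) (fun a => a + latUnit d j)
    · intro x hxm
      rw [Finset.mem_filter] at hxm ⊢
      exact ⟨hxm.2, by rw [sub_add_cancel]; exact hxm.1⟩
    · intro a ham
      rw [Finset.mem_filter] at ham ⊢
      exact ⟨ham.2, by rw [add_sub_cancel_right]; exact ham.1⟩
    · intro x _; rw [sub_add_cancel]
    · intro a _; rw [add_sub_cancel_right]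
    · intro x _
      rw [sub_add_cancel]
      ring
  rw [h1, h2]
  ring

end DTI

/-- Discrete trace inequality: there is `C = C(d)` such that for every `m`,
every `u : □_m → ℝ`, and every `0 ≤ K ≤ 3^m/4`,
`∑_{x ∈ □_m, dist(x,∂□_m) ≤ K} u(x)² ≤ C (K+1) (3^{−m} ‖u‖² + ‖u‖ ‖∇u‖)`,
with the ℓ^∞ distance and the cube Dirichlet energy. -/
theorem discrete_trace_inequality (d : ℕ) :
    ∃ C : ℝ, 0 < C ∧ ∀ m : ℕ, ∀ u : (Fin d → ℤ) → ℝ, ∀ K : ℝ,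
      0 ≤ K → K ≤ (3:ℝ)^m / 4 →
      ∑ x ∈ (triCube d m).filter
          (fun x => ∃ y ∈ triCubeBdry d m, ∀ i : Fin d, |((x i : ℝ) - (y i : ℝ))| ≤ K),
          (u x)^2
        ≤ C * (K + 1) *
          (((3:ℝ)^m)⁻¹ * ∑ x ∈ triCube d m, (u x)^2
            + Real.sqrt (∑ x ∈ triCube d m, (u x)^2) *
              Real.sqrt ((1/2) * ∑ x ∈ triCube d m, ∑ j : Fin d,
                ((if x + latUnit d j ∈ triCube d m then (u (x + latUnit d j) - u x)^2 else 0)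
                  + (if x - latUnit d j ∈ triCube d m then (u (x - latUnit d j) - u x)^2 else 0)))) := by
  refine ⟨8*((d:ℝ)+1), by positivity, ?_⟩
  intro m u K hK0 _hK34
  rw [DTI.energy_eq d m u]
  set Q := ∑ x ∈ triCube d m, (u x)^2 with hQ
  have hQ0 : 0 ≤ Q := Finset.sum_nonneg fun _ _ => sq_nonneg _
  set G : Fin d → ℝ := fun j =>
    ∑ a ∈ (triCube d m).filter (fun a => a + latUnit d j ∈ triCube d m),
      (u (a + latUnit d j) - u a)^2 with hG
  set W : Fin d → ℝ := fun j =>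
    ∑ a ∈ (triCube d m).filter (fun a => a + latUnit d j ∈ triCube d m),
      |u (a + latUnit d j) - u a| * (|u a| + |u (a + latUnit d j)|) with hW
  set H : Fin d → ℝ := fun j =>
    ∑ a ∈ (triCube d m).filter (fun a => a + latUnit d j ∈ triCube d m),
      (|u a| + |u (a + latUnit d j)|)^2 with hH
  have hG0 : ∀ j, 0 ≤ G j := fun j => Finset.sum_nonneg fun _ _ => sq_nonneg _
  have hH0 : ∀ j, 0 ≤ H j := fun j => Finset.sum_nonneg fun _ _ => sq_nonneg _
  have hW0 : ∀ j, 0 ≤ W j := fun j => Finset.sum_nonneg fun _ _ =>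
    mul_nonneg (abs_nonneg _) (add_nonneg (abs_nonneg _) (abs_nonneg _))
  -- Step A : union bound over the coordinate directions
  have stepA : ∑ x ∈ (triCube d m).filter
      (fun x => ∃ y ∈ triCubeBdry d m, ∀ i : Fin d, |((x i : ℝ) - (y i : ℝ))| ≤ K), (u x)^2
      ≤ ∑ j : Fin d, ∑ x ∈ (triCube d m).filter (fun x => DTI.tcR m - ⌊K⌋ ≤ |x j|), (u x)^2 := by
    have hpt : ∀ x ∈ (triCube d m).filter
        (fun x => ∃ y ∈ triCubeBdry d m, ∀ i : Fin d, |((x i : ℝ) - (y i : ℝ))| ≤ K),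
        (u x)^2 ≤ ∑ j : Fin d, (if DTI.tcR m - ⌊K⌋ ≤ |x j| then (u x)^2 else 0) := by
      intro x hx
      rw [Finset.mem_filter] at hx
      obtain ⟨hxc, y, hy, hxy⟩ := hx
      obtain ⟨j, hj⟩ := DTI.bdry_coord hy
      have hxj : DTI.tcR m - ⌊K⌋ ≤ |x j| := by
        have h1 : |(y j : ℝ)| - |(x j : ℝ)| ≤ |(y j : ℝ) - (x j : ℝ)| := abs_sub_abs_le_abs_sub _ _
        have h2 := hxy j
        have h2' : |(y j : ℝ) - (x j : ℝ)| ≤ K := by rwa [abs_sub_comm] at h2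
        have h3 : |(y j : ℝ)| = (DTI.tcR m : ℝ) := by
          rw [← Int.cast_abs]
          exact_mod_cast hj
        have h4 : ((DTI.tcR m - ⌊K⌋ - 1 : ℤ) : ℝ) < ((|x j| : ℤ) : ℝ) := by
          push_cast
          have h5 := Int.lt_floor_add_one K
          linarith
        have h6 : DTI.tcR m - ⌊K⌋ - 1 < |x j| := by exact_mod_cast h4
        omega
      have hsingle := Finset.single_le_sum
        (f := fun j : Fin d => if DTI.tcR m - ⌊K⌋ ≤ |x j| then (u x)^2 else 0)
        (fun i _ => by positivity) (Finset.mem_univ j)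
      simpa only [if_pos hxj] using hsingle
    refine le_trans (Finset.sum_le_sum hpt) ?_
    refine le_trans (Finset.sum_le_sum_of_subset_of_nonneg (Finset.filter_subset _ _)
      (fun x _ _ => Finset.sum_nonneg fun j _ => by positivity)) ?_
    rw [Finset.sum_comm]
    apply le_of_eq
    exact Finset.sum_congr rfl fun j _ => (Finset.sum_filter _ _).symm
  -- Step B applied to every direction
  have hB : ∀ j : Fin d, ∑ x ∈ (triCube d m).filter (fun x => DTI.tcR m - ⌊K⌋ ≤ |x j|), (u x)^2
      ≤ 2*(K+1) * (2 * ((3:ℝ)^m)⁻¹ * Q) + 2*(K+1) * W j :=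
    fun j => DTI.stepB d m j u K hK0
  -- Cauchy-Schwarz estimates
  have hCS : ∀ j : Fin d, W j ≤ Real.sqrt (G j) * Real.sqrt (H j) := by
    intro j
    apply DTI.le_sqrt_mul_sqrt _ _ _ (hW0 j) (hG0 j)
    have hcs := Finset.sum_mul_sq_le_sq_mul_sq
      ((triCube d m).filter (fun a => a + latUnit d j ∈ triCube d m))
      (fun a => |u (a + latUnit d j) - u a|) (fun a => |u a| + |u (a + latUnit d j)|)
    have habs : ∑ a ∈ (triCube d m).filter (fun a => a + latUnit d j ∈ triCube d m),
        |u (a + latUnit d j) - u a| ^ 2 = G j :=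
      Finset.sum_congr rfl fun a _ => sq_abs _
    rw [habs] at hcs
    exact hcs
  have hCS2 : ∑ j : Fin d, Real.sqrt (G j) * Real.sqrt (H j)
      ≤ Real.sqrt (∑ j : Fin d, G j) * Real.sqrt (∑ j : Fin d, H j) := by
    apply DTI.le_sqrt_mul_sqrt _ _ _
      (Finset.sum_nonneg fun j _ => mul_nonneg (Real.sqrt_nonneg _) (Real.sqrt_nonneg _))
      (Finset.sum_nonneg fun j _ => hG0 j)
    have hcs := Finset.sum_mul_sq_le_sq_mul_sq Finset.univ
      (fun j : Fin d => Real.sqrt (G j)) (fun j : Fin d => Real.sqrt (H j))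
    have e1 : ∑ j : Fin d, Real.sqrt (G j) ^ 2 = ∑ j : Fin d, G j :=
      Finset.sum_congr rfl fun j _ => Real.sq_sqrt (hG0 j)
    have e2 : ∑ j : Fin d, Real.sqrt (H j) ^ 2 = ∑ j : Fin d, H j :=
      Finset.sum_congr rfl fun j _ => Real.sq_sqrt (hH0 j)
    rw [e1, e2] at hcs
    exact hcs
  -- bound on H
  have hshift : ∀ j : Fin d,
      ∑ a ∈ (triCube d m).filter (fun a => a + latUnit d j ∈ triCube d m),
        u (a + latUnit d j) ^ 2 ≤ Q := by
    intro j
    have hb := DTI.sum_comp_le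
      ((triCube d m).filter (fun a => a + latUnit d j ∈ triCube d m)) (triCube d m)
      (fun a => a + latUnit d j) (fun y => u y ^ 2) (fun y => sq_nonneg _)
      (fun a ha => (Finset.mem_filter.mp ha).2) 1 ?_
    · rw [hQ]
      simpa using hb
    · intro y
      apply Finset.card_le_one.mpr
      intro a ha b hb2
      rw [Finset.mem_filter] at ha hb2
      have e1 : a + latUnit d j = y := ha.2
      have e2 : b + latUnit d j = y := hb2.2
      have := e1.trans e2.symm
      exact add_right_cancel this
  have hHle : ∀ j : Fin d, H j ≤ 4 * Q := by
    intro j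
    have hpt : ∀ a ∈ (triCube d m).filter (fun a => a + latUnit d j ∈ triCube d m),
        (|u a| + |u (a + latUnit d j)|)^2 ≤ 2 * u a ^ 2 + 2 * u (a + latUnit d j) ^ 2 := by
      intro a _
      have h1 := sq_nonneg (|u a| - |u (a + latUnit d j)|)
      have h2 := sq_abs (u a)
      have h3 := sq_abs (u (a + latUnit d j))
      nlinarith
    have h4 : ∑ a ∈ (triCube d m).filter (fun a => a + latUnit d j ∈ triCube d m),
        u a ^ 2 ≤ Q := by
      rw [hQ]
      exact Finset.sum_le_sum_of_subset_of_nonneg (Finset.filter_subset _ _)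
        (fun a _ _ => sq_nonneg _)
    calc H j ≤ ∑ a ∈ (triCube d m).filter (fun a => a + latUnit d j ∈ triCube d m),
          (2 * u a ^ 2 + 2 * u (a + latUnit d j) ^ 2) := Finset.sum_le_sum hpt
      _ = 2 * (∑ a ∈ (triCube d m).filter (fun a => a + latUnit d j ∈ triCube d m), u a ^ 2)
          + 2 * (∑ a ∈ (triCube d m).filter (fun a => a + latUnit d j ∈ triCube d m),
              u (a + latUnit d j) ^ 2) := by
          rw [Finset.sum_add_distrib, Finset.mul_sum, Finset.mul_sum]
      _ ≤ 2 * Q + 2 * Q :=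
          add_le_add (mul_le_mul_of_nonneg_left h4 (by norm_num))
            (mul_le_mul_of_nonneg_left (hshift j) (by norm_num))
      _ = 4 * Q := by ring
  have hsqH : Real.sqrt (∑ j : Fin d, H j) ≤ 2 * Real.sqrt d * Real.sqrt Q := by
    have h5 : ∑ j : Fin d, H j ≤ (d:ℝ) * (4 * Q) := by
      calc ∑ j : Fin d, H j ≤ ∑ _j : Fin d, 4 * Q := Finset.sum_le_sum fun j _ => hHle j
        _ = (d:ℝ) * (4 * Q) := by
            rw [Finset.sum_const, Finset.card_univ, Fintype.card_fin, nsmul_eq_mul]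
    calc Real.sqrt (∑ j : Fin d, H j) ≤ Real.sqrt ((d:ℝ) * (4 * Q)) := Real.sqrt_le_sqrt h5
      _ = 2 * Real.sqrt d * Real.sqrt Q := by
          rw [show (d:ℝ) * (4 * Q) = 2^2 * ((d:ℝ) * Q) by ring, Real.sqrt_mul (by positivity),
            Real.sqrt_sq (by norm_num : (0:ℝ) ≤ 2), Real.sqrt_mul (by positivity)]
          ring
  have hWsum : ∑ j : Fin d, W j
      ≤ Real.sqrt (∑ j : Fin d, G j) * (2 * Real.sqrt d * Real.sqrt Q) := by
    calc ∑ j : Fin d, W j ≤ ∑ j : Fin d, Real.sqrt (G j) * Real.sqrt (H j) :=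
          Finset.sum_le_sum fun j _ => hCS j
      _ ≤ Real.sqrt (∑ j : Fin d, G j) * Real.sqrt (∑ j : Fin d, H j) := hCS2
      _ ≤ Real.sqrt (∑ j : Fin d, G j) * (2 * Real.sqrt d * Real.sqrt Q) :=
          mul_le_mul_of_nonneg_left hsqH (Real.sqrt_nonneg _)
  -- put everything together
  have hK1 : (0:ℝ) ≤ 2*(K+1) := by linarith
  have hsd : Real.sqrt d ≤ (d:ℝ) + 1 := by
    have h6 : (d:ℝ) ≤ ((d:ℝ)+1)^2 := by nlinarith [sq_nonneg (d:ℝ), Nat.cast_nonneg (α := ℝ) d]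
    calc Real.sqrt d ≤ Real.sqrt (((d:ℝ)+1)^2) := Real.sqrt_le_sqrt h6
      _ = (d:ℝ)+1 := Real.sqrt_sq (by positivity)
  have hsd0 : (0:ℝ) ≤ Real.sqrt d := Real.sqrt_nonneg _
  have hsG0 : (0:ℝ) ≤ Real.sqrt (∑ j : Fin d, G j) := Real.sqrt_nonneg _
  have hsQ0 : (0:ℝ) ≤ Real.sqrt Q := Real.sqrt_nonneg _
  have hinv0 : (0:ℝ) ≤ ((3:ℝ)^m)⁻¹ := by positivity
  refine le_trans stepA ?_
  calc ∑ j : Fin d, ∑ x ∈ (triCube d m).filter (fun x => DTI.tcR m - ⌊K⌋ ≤ |x j|), (u x)^2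
      ≤ ∑ j : Fin d, (2*(K+1) * (2 * ((3:ℝ)^m)⁻¹ * Q) + 2*(K+1) * W j) :=
        Finset.sum_le_sum fun j _ => hB j
    _ = (d:ℝ) * (2*(K+1) * (2 * ((3:ℝ)^m)⁻¹ * Q)) + 2*(K+1) * ∑ j : Fin d, W j := by
        rw [Finset.sum_add_distrib, Finset.sum_const, Finset.card_univ, Fintype.card_fin,
          nsmul_eq_mul, ← Finset.mul_sum]
    _ ≤ (d:ℝ) * (2*(K+1) * (2 * ((3:ℝ)^m)⁻¹ * Q))
        + 2*(K+1) * (Real.sqrt (∑ j : Fin d, G j) * (2 * Real.sqrt d * Real.sqrt Q)) := by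
        have := mul_le_mul_of_nonneg_left hWsum hK1
        linarith
    _ ≤ 8*((d:ℝ)+1) * (K + 1) * (((3:ℝ)^m)⁻¹ * Q
        + Real.sqrt Q * Real.sqrt (∑ j : Fin d, G j)) := by
        have ha0 : (0:ℝ) ≤ ((3:ℝ)^m)⁻¹ * Q := mul_nonneg hinv0 hQ0
        have hb0 : (0:ℝ) ≤ Real.sqrt Q * Real.sqrt (∑ j : Fin d, G j) :=
          mul_nonneg hsQ0 hsG0
        have t1 : (0:ℝ) ≤ (K+1) * ((8*((d:ℝ)+1) - 4*(d:ℝ)) * (((3:ℝ)^m)⁻¹ * Q)) := by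
          apply mul_nonneg (by linarith)
          apply mul_nonneg (by linarith [Nat.cast_nonneg (α := ℝ) d]) ha0
        have t2 : (0:ℝ) ≤ (K+1) * ((8*((d:ℝ)+1) - 4*Real.sqrt d)
            * (Real.sqrt Q * Real.sqrt (∑ j : Fin d, G j))) := by
          apply mul_nonneg (by linarith)
          apply mul_nonneg (by linarith) hb0
        nlinarith [t1, t2]
end

section
/- Product rule for the O_s calculus: if X, Y are nonnegative random variables with E[exp((X/θ₁)^{s₁})] ≤ 2 and E[exp((Y/θ₂)^{s₂})] ≤ 2 for s₁, s₂ > 0 and θ₁, θ₂ > 0, then E[exp((XY/(θ₁θ₂))^{s₁s₂/(s₁+s₂)})] ≤ 2. -/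
open MeasureTheory

/-- Product rule for the `O_s` calculus: if `X, Y ≥ 0` satisfy
`E[exp((X/θ₁)^{s₁})] ≤ 2` and `E[exp((Y/θ₂)^{s₂})] ≤ 2`, then
`E[exp((XY/(θ₁θ₂))^{s₁s₂/(s₁+s₂)})] ≤ 2`. -/
theorem Os_product_rule {Ω : Type*} [MeasurableSpace Ω]
    (μ : Measure Ω) [IsProbabilityMeasure μ]
    (X Y : Ω → ℝ) (hXm : Measurable X) (hYm : Measurable Y)
    (hX0 : ∀ ω, 0 ≤ X ω) (hY0 : ∀ ω, 0 ≤ Y ω)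
    (s₁ s₂ θ₁ θ₂ : ℝ) (hs₁ : 0 < s₁) (hs₂ : 0 < s₂) (hθ₁ : 0 < θ₁) (hθ₂ : 0 < θ₂)
    (hX : ∫⁻ ω, ENNReal.ofReal (Real.exp ((X ω / θ₁) ^ s₁)) ∂μ ≤ 2)
    (hY : ∫⁻ ω, ENNReal.ofReal (Real.exp ((Y ω / θ₂) ^ s₂)) ∂μ ≤ 2) :
    ∫⁻ ω, ENNReal.ofReal (Real.exp ((X ω * Y ω / (θ₁ * θ₂)) ^ (s₁ * s₂ / (s₁ + s₂)))) ∂μ ≤ 2 := by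
  have hsum : 0 < s₁ + s₂ := by linarith
  set s : ℝ := s₁ * s₂ / (s₁ + s₂) with hs_def
  have hs : 0 < s := by positivity
  set p : ℝ := (s₁ + s₂) / s₂ with hp_def
  set q : ℝ := (s₁ + s₂) / s₁ with hq_def
  have hp1 : 1 < p := by
    rw [hp_def, lt_div_iff₀ hs₂]; linarith
  have hpq : p.HolderConjugate q := by
    rw [Real.holderConjugate_iff]
    constructor
    · exact hp1
    · rw [hp_def, hq_def]
      field_simp
      ring
  have hsp : s * p = s₁ := by
    rw [hs_def, hp_def]; field_simp
  have hsq : s * q = s₂ := by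
    rw [hs_def, hq_def]; field_simp
  set F : Ω → ENNReal := fun ω => ENNReal.ofReal (Real.exp ((X ω / θ₁) ^ s₁)) ^ (1 / p) with hF
  set G : Ω → ENNReal := fun ω => ENNReal.ofReal (Real.exp ((Y ω / θ₂) ^ s₂)) ^ (1 / q) with hG
  have hFm : AEMeasurable F μ := by
    apply Measurable.aemeasurable
    exact ((((hXm.div_const θ₁).pow_const s₁).exp).ennreal_ofReal).pow_const _
  have hGm : AEMeasurable G μ := by
    apply Measurable.aemeasurable
    exact ((((hYm.div_const θ₂).pow_const s₂).exp).ennreal_ofReal).pow_const _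
  have key : ∀ ω, ENNReal.ofReal (Real.exp ((X ω * Y ω / (θ₁ * θ₂)) ^ s)) ≤ F ω * G ω := by
    intro ω
    set a : ℝ := X ω / θ₁ with ha_def
    set b : ℝ := Y ω / θ₂ with hb_def
    have ha : 0 ≤ a := div_nonneg (hX0 ω) hθ₁.le
    have hb : 0 ≤ b := div_nonneg (hY0 ω) hθ₂.le
    have h1 : X ω * Y ω / (θ₁ * θ₂) = a * b := by
      rw [ha_def, hb_def]; field_simp
    have h2 : (a * b) ^ s = a ^ s * b ^ s := Real.mul_rpow ha hb
    have h3 : a ^ s * b ^ s ≤ (a ^ s) ^ p / p + (b ^ s) ^ q / q :=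
      Real.young_inequality_of_nonneg (Real.rpow_nonneg ha s) (Real.rpow_nonneg hb s) hpq
    have h5 : (b ^ s) ^ q = b ^ s₂ := by rw [← Real.rpow_mul hb, hsq]
    have h4' : (a ^ s) ^ p = a ^ s₁ := by rw [← Real.rpow_mul ha, hsp]
    have hle : (a * b) ^ s ≤ a ^ s₁ / p + b ^ s₂ / q := by
      rw [h2]; calc a ^ s * b ^ s ≤ (a ^ s) ^ p / p + (b ^ s) ^ q / q := h3
        _ = a ^ s₁ / p + b ^ s₂ / q := by rw [h4', h5]
    have hexp : Real.exp ((a * b) ^ s) ≤ Real.exp (a ^ s₁) ^ (1 / p) * Real.exp (b ^ s₂) ^ (1 / q) := by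
      rw [← Real.exp_mul, ← Real.exp_mul, ← Real.exp_add]
      exact Real.exp_le_exp.2 (by rw [mul_one_div, mul_one_div] at *; exact hle)
    calc ENNReal.ofReal (Real.exp ((X ω * Y ω / (θ₁ * θ₂)) ^ s))
        ≤ ENNReal.ofReal (Real.exp (a ^ s₁) ^ (1 / p) * Real.exp (b ^ s₂) ^ (1 / q)) := by
          rw [h1]; exact ENNReal.ofReal_le_ofReal hexp
      _ = F ω * G ω := by
          rw [ENNReal.ofReal_mul (by positivity), hF, hG,
            ← ENNReal.ofReal_rpow_of_pos (Real.exp_pos _),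
            ← ENNReal.ofReal_rpow_of_pos (Real.exp_pos _)]
  calc ∫⁻ ω, ENNReal.ofReal (Real.exp ((X ω * Y ω / (θ₁ * θ₂)) ^ s)) ∂μ
      ≤ ∫⁻ ω, (F * G) ω ∂μ := lintegral_mono fun ω => key ω
    _ ≤ (∫⁻ ω, F ω ^ p ∂μ) ^ (1 / p) * (∫⁻ ω, G ω ^ q ∂μ) ^ (1 / q) :=
        ENNReal.lintegral_mul_le_Lp_mul_Lq μ hpq hFm hGm
    _ = (∫⁻ ω, ENNReal.ofReal (Real.exp ((X ω / θ₁) ^ s₁)) ∂μ) ^ (1 / p) *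
        (∫⁻ ω, ENNReal.ofReal (Real.exp ((Y ω / θ₂) ^ s₂)) ∂μ) ^ (1 / q) := by
          congr 1
          · congr 1; apply lintegral_congr; intro ω
            rw [hF, ← ENNReal.rpow_mul, one_div,
              inv_mul_cancel₀ hpq.ne_zero, ENNReal.rpow_one]
          · congr 1; apply lintegral_congr; intro ω
            rw [hG, ← ENNReal.rpow_mul, one_div,
              inv_mul_cancel₀ hpq.symm.ne_zero, ENNReal.rpow_one]
    _ ≤ 2 ^ (1 / p) * 2 ^ (1 / q) := by
        exact mul_le_mul' (ENNReal.rpow_le_rpow hX (by positivity))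
          (ENNReal.rpow_le_rpow hY (by positivity))
    _ = 2 := by
        rw [← ENNReal.rpow_add _ _ (by norm_num) (by norm_num),
          show (1:ℝ)/p + 1/q = 1 by rw [one_div, one_div]; exact hpq.inv_add_inv_eq_one,
          ENNReal.rpow_one]
end

section
/- Sum rule for the O_s calculus with s ≥ 1: let (E, 𝒮, m) be a measure space and {X(z)}_{z∈E} a measurable family of random variables with X(z) ≤ O_s(θ(z)) for every z, where s ≥ 1 and θ : E → (0,∞) is integrable. Then ∫_E X(z) m(dz) ≤ O_s(∫_E θ(z) m(dz)), i.e. E[exp((max(∫X dm / ∫θ dm, 0))^s)] ≤ 2. -/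
open MeasureTheory Set
open scoped NNReal ENNReal

lemma phi_convex {s : ℝ} (hs : 1 ≤ s) :
    ConvexOn ℝ Set.univ (fun t : ℝ => Real.exp (max t 0 ^ s)) := by
  have hs0 : s ≠ 0 := by positivity
  have himg1 : (fun t : ℝ => max t 0) '' Set.univ = Set.Ici 0 := by
    ext y
    simp only [Set.image_univ, Set.mem_range, Set.mem_Ici]
    constructor
    · rintro ⟨t, rfl⟩; exact le_max_right _ _
    · intro hy; exact ⟨y, max_eq_left hy⟩
  have h1 : ConvexOn ℝ Set.univ (fun t : ℝ => max t 0 ^ s) := by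
    have : ConvexOn ℝ Set.univ ((fun x : ℝ => x ^ s) ∘ (fun t : ℝ => max t 0)) := by
      refine ConvexOn.comp ?_ ?_ ?_
      · rw [himg1]; exact convexOn_rpow hs
      · exact (convexOn_id convex_univ).sup (convexOn_const 0 convex_univ)
      · rw [himg1]
        intro a ha b hb hab
        exact Real.rpow_le_rpow ha hab (by linarith)
    exact this
  have himg2 : (fun t : ℝ => max t 0 ^ s) '' Set.univ = Set.Ici 0 := by
    ext y
    simp only [Set.image_univ, Set.mem_range, Set.mem_Ici]
    constructor
    · rintro ⟨t, rfl⟩; positivity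
    · intro hy
      exact ⟨y ^ s⁻¹, by rw [max_eq_left (by positivity)]; exact Real.rpow_inv_rpow hy hs0⟩
  have : ConvexOn ℝ Set.univ (Real.exp ∘ (fun t : ℝ => max t 0 ^ s)) := by
    refine ConvexOn.comp ?_ h1 ?_
    · rw [himg2]; exact convexOn_exp.subset (Set.subset_univ _) (convex_Ici 0)
    · intro a _ b _ hab; exact Real.exp_le_exp.2 hab
  exact this

lemma phi_cont {s : ℝ} (hs : 1 ≤ s) :
    Continuous (fun t : ℝ => Real.exp (max t 0 ^ s)) := by
  apply Real.continuous_exp.comp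
  apply Continuous.rpow_const (continuous_id.max continuous_const)
  intro x; exact Or.inr (by linarith)

/-- Sum rule for the `O_s` calculus with `s ≥ 1`: if `X(z) ≤ O_s(θ(z))` for every
`z` in a measure space `(E, m)` with `θ > 0` integrable, then
`∫_E X(z) m(dz) ≤ O_s(∫_E θ(z) m(dz))`. -/
theorem Os_sum_rule {Ω E : Type*} [MeasurableSpace Ω] [MeasurableSpace E]
    (μ : Measure Ω) [IsProbabilityMeasure μ] (m : Measure E)
    (s : ℝ) (hs : 1 ≤ s)
    (X : E → Ω → ℝ) (θ : E → ℝ)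
    (hXmeas : Measurable (Function.uncurry X))
    (hθpos : ∀ z, 0 < θ z) (hθint : Integrable θ m)
    (hXint : ∀ ω, Integrable (fun z => X z ω) m)
    (hX : ∀ z, ∫⁻ ω, ENNReal.ofReal (Real.exp (max (X z ω / θ z) 0 ^ s)) ∂μ ≤ 2) :
    ∫⁻ ω, ENNReal.ofReal
        (Real.exp (max ((∫ z, X z ω ∂m) / (∫ z, θ z ∂m)) 0 ^ s)) ∂μ ≤ 2 := by
  have hs0 : s ≠ 0 := by positivity
  set T : ℝ := ∫ z, θ z ∂m with hTdef
  have hT0 : 0 ≤ T := integral_nonneg (fun z => (hθpos z).le)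
  rcases eq_or_lt_of_le hT0 with hT | hT
  · -- T = 0 case: m = 0
    have hm : m = 0 := by
      have hz : θ =ᵐ[m] 0 :=
        (integral_eq_zero_iff_of_nonneg (fun z => (hθpos z).le) hθint).1 hT.symm
      have : ∀ᵐ z ∂m, False := by
        filter_upwards [hz] with z hz
        exact absurd hz (hθpos z).ne'
      simpa [ae_iff] using this
    have : ∀ ω, (∫ z, X z ω ∂m) = 0 := fun ω => by simp [hm]
    simp only [this, ← hT, zero_div, max_self, Real.zero_rpow hs0, Real.exp_zero]
    simp
  · -- main case
    set f : E → ℝ≥0 := fun z => Real.toNNReal (θ z / T) with hfdef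
    have hθae : AEMeasurable θ m := hθint.1.aemeasurable
    have hfae : AEMeasurable f m := (hθae.div_const T).real_toNNReal
    set ν : Measure E := m.withDensity (fun z => (f z : ℝ≥0∞)) with hνdef
    have hνac : ν ≪ m := withDensity_absolutelyContinuous m _
    have hcoe : ∀ z, ((f z : ℝ) ) = θ z / T := fun z =>
      Real.coe_toNNReal _ (div_nonneg (hθpos z).le hT.le)
    have hνprob : IsProbabilityMeasure ν := by
      constructor
      rw [hνdef, withDensity_apply _ MeasurableSet.univ, setLIntegral_univ]
      have h1 : ∀ z, ((f z : ℝ≥0∞)) = ENNReal.ofReal (θ z / T) := fun z => rfl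
      simp only [h1]
      rw [← ofReal_integral_eq_lintegral_ofReal (hθint.div_const T)
        (Filter.Eventually.of_forall fun z => div_nonneg (hθpos z).le hT.le)]
      rw [integral_div, div_self hT.ne', ENNReal.ofReal_one]
    have key : ∀ ω, ENNReal.ofReal (Real.exp (max ((∫ z, X z ω ∂m) / T) 0 ^ s))
        ≤ ∫⁻ z, ENNReal.ofReal (Real.exp (max (X z ω / θ z) 0 ^ s)) ∂ν := by
      intro ω
      have hXzmeas : Measurable (fun z => X z ω) :=
        hXmeas.comp (measurable_id.prodMk measurable_const)
      have hgae : AEMeasurable (fun z => X z ω / θ z) ν :=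
        hXzmeas.aemeasurable.div (hθae.mono_ac hνac)
      have hsm : (fun z => f z • (X z ω / θ z)) = fun z => X z ω / T := by
        funext z
        rw [NNReal.smul_def, smul_eq_mul, hcoe z, div_mul_div_comm,
          mul_comm (θ z) (X z ω), mul_div_mul_right _ _ (hθpos z).ne']
      have hgint : Integrable (fun z => X z ω / θ z) ν := by
        rw [hνdef, integrable_withDensity_iff_integrable_smul₀ hfae, hsm]
        exact (hXint ω).div_const T
      have hgavg : ∫ z, X z ω / θ z ∂ν = (∫ z, X z ω ∂m) / T := by
        rw [hνdef, integral_withDensity_eq_integral_smul₀ hfae, hsm, integral_div]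
      by_cases hA : ∫⁻ z, ENNReal.ofReal (Real.exp (max (X z ω / θ z) 0 ^ s)) ∂ν = ⊤
      · rw [hA]; exact le_top
      · have hφg_int : Integrable (fun z => Real.exp (max (X z ω / θ z) 0 ^ s)) ν := by
          refine ⟨((phi_cont hs).measurable.comp_aemeasurable hgae).aestronglyMeasurable, ?_⟩
          rw [hasFiniteIntegral_iff_ofReal
            (Filter.Eventually.of_forall fun z => (Real.exp_pos _).le)]
          exact lt_top_iff_ne_top.2 hA
        have hjen := (phi_convex hs).map_integral_le (phi_cont hs).continuousOn
          isClosed_univ (Filter.Eventually.of_forall fun z => Set.mem_univ _) hgint hφg_int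
        rw [hgavg] at hjen
        calc ENNReal.ofReal (Real.exp (max ((∫ z, X z ω ∂m) / T) 0 ^ s))
            ≤ ENNReal.ofReal (∫ z, Real.exp (max (X z ω / θ z) 0 ^ s) ∂ν) :=
              ENNReal.ofReal_le_ofReal hjen
          _ = ∫⁻ z, ENNReal.ofReal (Real.exp (max (X z ω / θ z) 0 ^ s)) ∂ν :=
              ofReal_integral_eq_lintegral_ofReal hφg_int
                (Filter.Eventually.of_forall fun z => (Real.exp_pos _).le)
    have hswapmeas : AEMeasurable
        (Function.uncurry fun (ω : Ω) (z : E) =>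
          ENNReal.ofReal (Real.exp (max (X z ω / θ z) 0 ^ s))) (μ.prod ν) := by
      have h1 : Measurable (fun p : Ω × E => X p.2 p.1) := hXmeas.comp measurable_swap
      have h2 : AEMeasurable (fun p : Ω × E => θ p.2) (μ.prod ν) :=
        (hθae.mono_ac hνac).comp_snd
      exact (ENNReal.continuous_ofReal.comp (phi_cont hs)).measurable.comp_aemeasurable
        (h1.aemeasurable.div h2)
    calc ∫⁻ ω, ENNReal.ofReal (Real.exp (max ((∫ z, X z ω ∂m) / T) 0 ^ s)) ∂μ
        ≤ ∫⁻ ω, ∫⁻ z, ENNReal.ofReal (Real.exp (max (X z ω / θ z) 0 ^ s)) ∂ν ∂μ :=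
          lintegral_mono key
      _ = ∫⁻ z, ∫⁻ ω, ENNReal.ofReal (Real.exp (max (X z ω / θ z) 0 ^ s)) ∂μ ∂ν :=
          lintegral_lintegral_swap hswapmeas
      _ ≤ ∫⁻ z, 2 ∂ν := lintegral_mono fun z => hX z
      _ = 2 := by simp
end

section
/- Maximum rule for the O_s calculus: there is a constant depending only on s such that for every N ≥ 1 and random variables X_1, …, X_N each satisfying X_i ≤ O_s(1), one has max_{1≤i≤N} X_i ≤ O_s((log(2N)/log(3/2))^{1/s}), i.e. E[exp((max_i X_i / (log(2N)/log(3/2))^{1/s})_+^s)] ≤ 2. -/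
open MeasureTheory

/-- Maximum rule for the `O_s` calculus: for `N = n+1 ≥ 1` random variables with
`X_i ≤ O_s(1)`, one has `max_i X_i ≤ O_s((log(2N)/log(3/2))^{1/s})`. -/
theorem Os_max_rule {Ω : Type*} [MeasurableSpace Ω]
    (μ : Measure Ω) [IsProbabilityMeasure μ]
    (s : ℝ) (hs : 0 < s) (n : ℕ) (X : Fin (n + 1) → Ω → ℝ)
    (hXm : ∀ i, Measurable (X i))
    (hX : ∀ i, ∫⁻ ω, ENNReal.ofReal (Real.exp (max (X i ω) 0 ^ s)) ∂μ ≤ 2) :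
    ∫⁻ ω, ENNReal.ofReal
        (Real.exp (max ((⨆ i, X i ω) /
          ((Real.log (2 * (n + 1 : ℝ)) / Real.log (3/2)) ^ ((1:ℝ)/s))) 0 ^ s)) ∂μ ≤ 2 := by
  set c : ℝ := Real.log (2 * (n + 1 : ℝ)) / Real.log (3/2) with hc
  have hlog32 : (0:ℝ) < Real.log (3/2) := Real.log_pos (by norm_num)
  have hn1 : (1:ℝ) ≤ (n:ℝ) + 1 := le_add_of_nonneg_left (Nat.cast_nonneg n)
  have h2N1 : (1:ℝ) < 2 * ((n:ℝ) + 1) := by nlinarith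
  have hlog2N : Real.log (3/2) < Real.log (2 * ((n:ℝ) + 1)) := by
    apply Real.log_lt_log (by norm_num)
    nlinarith
  have hc1 : 1 < c := (one_lt_div hlog32).2 hlog2N
  have hc0 : 0 < c := lt_trans one_pos hc1
  set θ : ℝ := c ^ ((1:ℝ)/s) with hθ
  have hθ0 : 0 < θ := Real.rpow_pos_of_pos hc0 _
  have hθs : θ ^ s = c := by
    rw [hθ, ← Real.rpow_mul hc0.le, one_div, inv_mul_cancel₀ hs.ne', Real.rpow_one]
  -- pointwise identity
  have hpt : ∀ ω, ENNReal.ofReal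
      (Real.exp (max ((⨆ i, X i ω) / θ) 0 ^ s))
      = (ENNReal.ofReal (Real.exp (max (⨆ i, X i ω) 0 ^ s))) ^ ((1:ℝ)/c) := by
    intro ω
    have h1 : max ((⨆ i, X i ω) / θ) 0 = max (⨆ i, X i ω) 0 / θ := by
      rw [← max_div_div_right hθ0.le, zero_div]
    rw [h1, Real.div_rpow (le_max_right _ _) hθ0.le, hθs, div_eq_mul_one_div,
      Real.exp_mul, ENNReal.ofReal_rpow_of_pos (Real.exp_pos _)]
  set f : Ω → ENNReal := fun ω => ENNReal.ofReal (Real.exp (max (⨆ i, X i ω) 0 ^ s))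
    with hf
  have hfm : Measurable f := by
    exact (((Real.continuous_rpow_const hs.le).measurable.comp
      ((Measurable.iSup hXm).max measurable_const)).exp).ennreal_ofReal
  -- bound on the integral of f
  have hfsum : ∀ ω, f ω ≤ ∑ i : Fin (n+1), ENNReal.ofReal (Real.exp (max (X i ω) 0 ^ s)) := by
    intro ω
    obtain ⟨j, hj⟩ := Finite.exists_max (fun i => X i ω)
    have hsup : (⨆ i, X i ω) = X j ω :=
      le_antisymm (ciSup_le hj)
        (le_ciSup (f := fun i => X i ω) (Set.finite_range _).bddAbove j)
    rw [hf]
    simp only [hsup]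
    exact Finset.single_le_sum
      (f := fun i => ENNReal.ofReal (Real.exp (max (X i ω) 0 ^ s)))
      (fun i _ => zero_le) (Finset.mem_univ j)
  have hint : ∫⁻ ω, f ω ∂μ ≤ ENNReal.ofReal (2 * ((n:ℝ) + 1)) := by
    calc ∫⁻ ω, f ω ∂μ
        ≤ ∫⁻ ω, ∑ i : Fin (n+1), ENNReal.ofReal (Real.exp (max (X i ω) 0 ^ s)) ∂μ :=
          lintegral_mono hfsum
      _ = ∑ i : Fin (n+1), ∫⁻ ω, ENNReal.ofReal (Real.exp (max (X i ω) 0 ^ s)) ∂μ := by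
          apply lintegral_finset_sum
          intro i _
          exact (((Real.continuous_rpow_const hs.le).measurable.comp
            ((hXm i).max measurable_const)).exp).ennreal_ofReal
      _ ≤ ∑ _i : Fin (n+1), 2 := Finset.sum_le_sum fun i _ => hX i
      _ = ENNReal.ofReal (2 * ((n:ℝ) + 1)) := by
          rw [Finset.sum_const, Finset.card_univ, Fintype.card_fin,
            ENNReal.ofReal_mul (by norm_num), mul_comm,
            ENNReal.ofReal_add (Nat.cast_nonneg n) zero_le_one,
            ENNReal.ofReal_natCast, ENNReal.ofReal_one, ENNReal.ofReal_ofNat,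
            nsmul_eq_mul]
          push_cast
          ring
  -- Hölder / concavity step
  have hp0 : (0:ℝ) ≤ 1/c := by positivity
  have hq0 : (0:ℝ) ≤ 1 - 1/c := by
    have : 1/c ≤ 1 := by
      rw [div_le_one hc0]; exact hc1.le
    linarith
  have hjensen : ∫⁻ ω, f ω ^ ((1:ℝ)/c) ∂μ ≤ (∫⁻ ω, f ω ∂μ) ^ ((1:ℝ)/c) := by
    have h := ENNReal.lintegral_mul_norm_pow_le (μ := μ) hfm.aemeasurable
      (aemeasurable_const (b := (1:ENNReal))) hp0 hq0 (by ring)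
    simpa [lintegral_const, ENNReal.one_rpow, measure_univ] using h
  -- final computation
  have hfinal : (ENNReal.ofReal (2 * ((n:ℝ) + 1))) ^ ((1:ℝ)/c) ≤ 2 := by
    rw [ENNReal.ofReal_rpow_of_pos (by linarith)]
    have : (2 * ((n:ℝ) + 1)) ^ ((1:ℝ)/c) = 3/2 := by
      have hlogne : Real.log (2 * ((n:ℝ) + 1)) ≠ 0 := ne_of_gt (lt_trans hlog32 hlog2N)
      have hexp : Real.log (2 * ((n:ℝ) + 1)) * ((1:ℝ)/c) = Real.log (3/2) := by
        rw [hc]; field_simp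
      rw [Real.rpow_def_of_pos (by linarith), hexp, Real.exp_log (by norm_num)]
    rw [this]
    rw [show ((2:ENNReal)) = ENNReal.ofReal 2 by simp]
    exact ENNReal.ofReal_le_ofReal (by norm_num)
  calc ∫⁻ ω, ENNReal.ofReal (Real.exp (max ((⨆ i, X i ω) / θ) 0 ^ s)) ∂μ
      = ∫⁻ ω, f ω ^ ((1:ℝ)/c) ∂μ := by simp_rw [hpt]; rfl
    _ ≤ (∫⁻ ω, f ω ∂μ) ^ ((1:ℝ)/c) := hjensen
    _ ≤ (ENNReal.ofReal (2 * ((n:ℝ) + 1))) ^ ((1:ℝ)/c) :=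
        ENNReal.rpow_le_rpow hint hp0
    _ ≤ 2 := hfinal
end
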